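/- For every finite simple graph G on n vertices with at least one edge, ρ_T̂(G) ≤ n − α(G), where α(G) is the size of a largest independent set of vertices in G. Furthermore, if G is triangle-free, then ρ_T̂(G) = n − α(G). -/
import Mathlib


/-- A max-plus `k`-tropical dot product representation of `G` with threshold `t`:
distinct vertices `x, y` are adjacent iff `max_{1 ≤ i ≤ k} (f(x)_i + f(y)_i) ≥ t`
(equivalently, some coordinate sum is at least `t`). -/
def MaxPlusRep {V : Type*} (G : SimpleGraph V) (k : ℕ) (f : V → Fin k → ℝ) (t : ℝ) : Prop :=
  0 < t ∧ ∀ x y : V, x ≠ y → (G.Adj x y ↔ ∃ i : Fin k, t ≤ f x i + f y i)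

/-- The max-plus tropical dot product dimension `ρ_T̂(G)`. -/
noncomputable def rhoTHat {V : Type*} (G : SimpleGraph V) : ℕ :=
  sInf {k : ℕ | 0 < k ∧ ∃ (f : V → Fin k → ℝ) (t : ℝ), MaxPlusRep G k f t}

/-- The independence number `α(G)`: the maximum size of a set of pairwise nonadjacent
vertices. -/
noncomputable def indepNum {V : Type*} [Fintype V] (G : SimpleGraph V) : ℕ :=
  sSup {n : ℕ | ∃ s : Finset V, s.card = n ∧ ∀ x ∈ s, ∀ y ∈ s, ¬ G.Adj x y}

section aux
variable {V : Type*} [Fintype V] (G : SimpleGraph V)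

lemma indep_bddAbove :
    BddAbove {n : ℕ | ∃ s : Finset V, s.card = n ∧ ∀ x ∈ s, ∀ y ∈ s, ¬ G.Adj x y} := by
  refine ⟨Fintype.card V, ?_⟩
  rintro n ⟨s, rfl, -⟩
  exact s.card_le_univ

lemma card_le_indepNum {s : Finset V} (hs : ∀ x ∈ s, ∀ y ∈ s, ¬ G.Adj x y) :
    s.card ≤ indepNum G :=
  le_csSup (indep_bddAbove G) ⟨s, rfl, hs⟩

lemma exists_max_indep :
    ∃ s : Finset V, s.card = indepNum G ∧ ∀ x ∈ s, ∀ y ∈ s, ¬ G.Adj x y := by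
  have h := Nat.sSup_mem
    (s := {n : ℕ | ∃ s : Finset V, s.card = n ∧ ∀ x ∈ s, ∀ y ∈ s, ¬ G.Adj x y})
    ⟨0, ∅, by simp⟩ (indep_bddAbove G)
  obtain ⟨s, hc, hi⟩ := h
  exact ⟨s, hc, hi⟩

end aux

theorem stmt_7 {V : Type*} [Fintype V] (G : SimpleGraph V) (hedge : ∃ x y, G.Adj x y) :
    rhoTHat G ≤ Fintype.card V - indepNum G ∧
      (G.CliqueFree 3 → rhoTHat G = Fintype.card V - indepNum G) := by
  classical
  obtain ⟨s, hscard, hsindep⟩ := exists_max_indep G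
  obtain ⟨a, b, hab⟩ := hedge
  -- the complement of s
  set W : Finset V := sᶜ with hW
  have hWcard : W.card = Fintype.card V - indepNum G := by
    rw [hW, Finset.card_compl, hscard]
  -- W is nonempty
  have hWne : 0 < W.card := by
    rcases Classical.em (a ∈ s) with ha | ha
    · have hb : b ∉ s := fun hb => hsindep a ha b hb hab
      exact Finset.card_pos.mpr ⟨b, by simp [hW, hb]⟩
    · exact Finset.card_pos.mpr ⟨a, by simp [hW, ha]⟩
  set k := W.card with hk
  -- the representation
  have hmem : k ∈ {k : ℕ | 0 < k ∧ ∃ (f : V → Fin k → ℝ) (t : ℝ), MaxPlusRep G k f t} := by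
    refine ⟨hWne, ?_⟩
    set e : Fin k ≃ W := W.equivFin.symm with he
    refine ⟨fun v i => if v = (e i : V) then 2 else if G.Adj v (e i) then 0 else -10, 2,
      by norm_num, ?_⟩
    intro x y hxy
    constructor
    · intro hadj
      -- one of x, y is in W
      have hone : x ∈ W ∨ y ∈ W := by
        by_contra h
        push_neg at h
        simp only [hW, Finset.mem_compl, not_not] at h
        exact hsindep x h.1 y h.2 hadj
      rcases hone with hx | hy
      · refine ⟨e.symm ⟨x, hx⟩, ?_⟩
        have hex : (e (e.symm ⟨x, hx⟩) : V) = x := by simp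
        dsimp only
        rw [hex]
        simp only [if_pos rfl, if_neg (Ne.symm hxy), if_pos hadj.symm]
        norm_num
      · refine ⟨e.symm ⟨y, hy⟩, ?_⟩
        have hey : (e (e.symm ⟨y, hy⟩) : V) = y := by simp
        dsimp only
        rw [hey]
        simp only [if_pos rfl, if_neg hxy, if_pos hadj]
        norm_num
    · rintro ⟨i, hi⟩
      set w : V := (e i : V) with hw
      by_cases hxw : x = w
      · by_cases hyw : y = w
        · exact absurd (hxw.trans hyw.symm) hxy
        · simp only [← hw, if_pos hxw, if_neg hyw] at hi
          by_cases hyadj : G.Adj y w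
          · rw [if_pos hyadj] at hi
            exact hxw ▸ hyadj.symm
          · rw [if_neg hyadj] at hi; norm_num at hi
      · by_cases hyw : y = w
        · simp only [← hw, if_pos hyw, if_neg hxw] at hi
          by_cases hxadj : G.Adj x w
          · rw [if_pos hxadj] at hi
            exact hyw ▸ hxadj
          · rw [if_neg hxadj] at hi; norm_num at hi
        · simp only [← hw, if_neg hxw, if_neg hyw] at hi
          by_cases hxadj : G.Adj x w <;> by_cases hyadj : G.Adj y w <;>
            simp_all <;> norm_num at hi
  have hub : rhoTHat G ≤ Fintype.card V - indepNum G := by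
    rw [← hWcard]
    exact Nat.sInf_le hmem
  refine ⟨hub, fun hfree => ?_⟩
  -- lower bound: every element of the set is ≥ n - α
  have hlb : ∀ m ∈ {k : ℕ | 0 < k ∧ ∃ (f : V → Fin k → ℝ) (t : ℝ), MaxPlusRep G k f t},
      Fintype.card V - indepNum G ≤ m := by
    rintro m ⟨-, f, t, ht, hrep⟩
    haveI : Nonempty V := ⟨a⟩
    -- for each coordinate, pick an argmax
    have hmax : ∀ i : Fin m, ∃ v : V, ∀ u : V, f u i ≤ f v i := by
      intro i
      obtain ⟨v, -, hv⟩ := Finset.exists_max_image Finset.univ (fun u => f u i)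
        ⟨a, Finset.mem_univ a⟩
      exact ⟨v, fun u => hv u (Finset.mem_univ u)⟩
    choose c hc using hmax
    set T : Finset V := Finset.univ.image c with hT
    -- complement of T is independent
    have hind : ∀ x ∈ Tᶜ, ∀ y ∈ Tᶜ, ¬ G.Adj x y := by
      intro x hx y hy hadj
      have hxy : x ≠ y := hadj.ne
      obtain ⟨i, hi⟩ := (hrep x y hxy).mp hadj
      have hcx : c i ≠ x := by
        intro h; apply (Finset.mem_compl.mp hx)
        rw [hT, ← h]; exact Finset.mem_image_of_mem c (Finset.mem_univ i)
      have hcy : c i ≠ y := by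
        intro h; apply (Finset.mem_compl.mp hy)
        rw [hT, ← h]; exact Finset.mem_image_of_mem c (Finset.mem_univ i)
      -- c i adjacent to both x and y
      have h1 : G.Adj (c i) y := by
        refine (hrep (c i) y hcy).mpr ⟨i, ?_⟩
        have := hc i x
        linarith
      have h2 : G.Adj x (c i) := by
        refine (hrep x (c i) (Ne.symm hcx)).mpr ⟨i, ?_⟩
        have := hc i y
        linarith
      exact hfree {x, y, c i} (SimpleGraph.is3Clique_triple_iff.mpr ⟨hadj, h2, h1.symm⟩)
    have h1 : Tᶜ.card ≤ indepNum G := card_le_indepNum G hind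
    have h2 : T.card ≤ m := le_trans Finset.card_image_le (by simp)
    have h3 : Fintype.card V ≤ T.card + Tᶜ.card := by
      rw [Finset.card_compl]
      omega
    omega
  have hmemInf : rhoTHat G ∈ _ := Nat.sInf_mem (⟨k, hmem⟩ :
    {k : ℕ | 0 < k ∧ ∃ (f : V → Fin k → ℝ) (t : ℝ), MaxPlusRep G k f t}.Nonempty)
  exact le_antisymm hub (hlb _ hmemInf)
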